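/- arXiv:1210.2103 — 4 statements merged into one kernel-verified Lean document; each statement's English description precedes it below -/
import Mathlib

section
/- For projections P, Q on a Hilbert space H, P⊥*Q holds if and only if π(PQ) = π(QP) and P⊤*Q, where π is the quotient map to the Calkin algebra. -/
set_option linter.unusedSectionVars false
open ContinuousLinearMap

section Aux

open Metric Set

variable {H : Type*} [NormedAddCommGroup H] [InnerProductSpace ℂ H] [CompleteSpace H]

private lemma norm_sq_le_key (T : H →L[ℂ] H) (z : H) :
    ‖T z‖ ^ 2 ≤ ‖(adjoint T ∘L T) z‖ * ‖z‖ := by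
  have h1 : (inner ℂ ((adjoint T ∘L T) z) z : ℂ) = inner ℂ (T z) (T z) := by
    simp [adjoint_inner_left]
  have h2 : ‖T z‖ ^ 2 = RCLike.re (inner ℂ (T z) (T z) : ℂ) :=
    (inner_self_eq_norm_sq _).symm
  rw [h2, ← h1]
  calc RCLike.re (inner ℂ ((adjoint T ∘L T) z) z : ℂ) ≤ ‖(inner ℂ ((adjoint T ∘L T) z) z : ℂ)‖ :=
        RCLike.re_le_norm _
    _ ≤ ‖(adjoint T ∘L T) z‖ * ‖z‖ := norm_inner_le_norm _ _

private lemma isCompactOperator_of_adjoint_comp {T : H →L[ℂ] H}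
    (h : IsCompactOperator ⇑(adjoint T ∘L T)) : IsCompactOperator ⇑T := by
  classical
  set A := adjoint T ∘L T with hA
  set B := closedBall (0 : H) 1 with hB
  obtain ⟨K₀, hK₀, hK₀sub⟩ :=
    IsCompactOperator.image_closedBall_subset_compact (f := (A : H →ₗ[ℂ] H)) h 1
  have tbA : TotallyBounded (⇑A '' B) := hK₀.totallyBounded.subset hK₀sub
  have tbT : TotallyBounded (⇑T '' B) := by
    rw [Metric.totallyBounded_iff]
    intro ε hε
    obtain ⟨t, htfin, htcov⟩ := (Metric.totallyBounded_iff).1 tbA (ε ^ 2 / 8) (by positivity)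
    set g : H → H := fun c => if hc : ∃ y, y ∈ B ∧ dist (A y) c < ε ^ 2 / 8
      then hc.choose else 0 with hg
    refine ⟨T '' (g '' t), (htfin.image g).image T, ?_⟩
    rintro _ ⟨x, hx, rfl⟩
    have hAx : A x ∈ ⋃ c ∈ t, ball c (ε ^ 2 / 8) := htcov (mem_image_of_mem _ hx)
    obtain ⟨c, hct, hxc⟩ := mem_iUnion₂.1 hAx
    have hPc : ∃ y, y ∈ B ∧ dist (A y) c < ε ^ 2 / 8 := ⟨x, hx, hxc⟩
    have hgc : g c ∈ B ∧ dist (A (g c)) c < ε ^ 2 / 8 := by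
      rw [hg]; simp only [dif_pos hPc]; exact hPc.choose_spec
    set y := g c
    have hxB : ‖x‖ ≤ 1 := by simpa [hB, mem_closedBall, dist_zero_right] using hx
    have hyB : ‖y‖ ≤ 1 := by simpa [hB, mem_closedBall, dist_zero_right] using hgc.1
    have hAxy : ‖A (x - y)‖ < ε ^ 2 / 4 := by
      have : dist (A x) (A y) < ε ^ 2 / 8 + ε ^ 2 / 8 :=
        (dist_triangle (A x) c (A y)).trans_lt
          (add_lt_add hxc (by rw [dist_comm]; exact hgc.2))
      rw [dist_eq_norm, ← map_sub] at this
      linarith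
    have hxy : ‖x - y‖ ≤ 2 := (norm_sub_le x y).trans (by linarith)
    have key : ‖T (x - y)‖ ^ 2 ≤ ‖A (x - y)‖ * ‖x - y‖ := norm_sq_le_key T (x - y)
    have hTxy : ‖T x - T y‖ < ε := by
      have h4 : ‖T (x - y)‖ ^ 2 < ε ^ 2 := by
        nlinarith [norm_nonneg (A (x - y)), norm_nonneg (x - y), norm_nonneg (T (x - y))]
      rw [map_sub] at h4
      nlinarith [norm_nonneg (T x - T y)]
    exact mem_iUnion₂.2 ⟨T y, mem_image_of_mem _ (mem_image_of_mem _ hct),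
      by rwa [mem_ball, dist_eq_norm]⟩
  refine ⟨closure (⇑T '' B), tbT.closure.isCompact_of_isClosed isClosed_closure, ?_⟩
  exact Filter.mem_of_superset (Metric.closedBall_mem_nhds 0 one_pos)
    fun x hx => subset_closure (mem_image_of_mem _ hx)

end Aux

/-- Essential norm: the norm of the image of `T` in the Calkin algebra. -/
noncomputable def essNorm {H : Type*} [NormedAddCommGroup H] [InnerProductSpace ℂ H]
    [CompleteSpace H] (T : H →L[ℂ] H) : ℝ :=
  sInf {c : ℝ | ∃ K : H →L[ℂ] H, IsCompactOperator ⇑K ∧ c = ‖T + K‖}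

section EssNorm

variable {H : Type*} [NormedAddCommGroup H] [InnerProductSpace ℂ H] [CompleteSpace H]

private lemma essNorm_set_nonempty (T : H →L[ℂ] H) :
    {c : ℝ | ∃ K : H →L[ℂ] H, IsCompactOperator ⇑K ∧ c = ‖T + K‖}.Nonempty :=
  ⟨‖T + 0‖, 0, by simpa using isCompactOperator_zero, rfl⟩

private lemma essNorm_set_bddBelow (T : H →L[ℂ] H) :
    BddBelow {c : ℝ | ∃ K : H →L[ℂ] H, IsCompactOperator ⇑K ∧ c = ‖T + K‖} :=
  ⟨0, by rintro c ⟨K, -, rfl⟩; exact norm_nonneg _⟩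

private lemma essNorm_nonneg (T : H →L[ℂ] H) : 0 ≤ essNorm T :=
  le_csInf (essNorm_set_nonempty T) (by rintro c ⟨K, -, rfl⟩; exact norm_nonneg _)

private lemma essNorm_le (T : H →L[ℂ] H) {K : H →L[ℂ] H} (hK : IsCompactOperator ⇑K) :
    essNorm T ≤ ‖T + K‖ :=
  csInf_le (essNorm_set_bddBelow T) ⟨K, hK, rfl⟩

/-- If `essNorm T = 0`, then `T` is compact (compact operators are closed). -/
private lemma isCompactOperator_of_essNorm_eq_zero {T : H →L[ℂ] H} (h : essNorm T = 0) :
    IsCompactOperator ⇑T := by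
  have hmem : T ∈ closure {f : H →L[ℂ] H | IsCompactOperator ⇑f} := by
    rw [Metric.mem_closure_iff]
    intro ε hε
    have : essNorm T < ε := h ▸ hε
    obtain ⟨c, ⟨K, hK, rfl⟩, hc⟩ := exists_lt_of_csInf_lt (essNorm_set_nonempty T) this
    refine ⟨-K, ?_, by rwa [dist_eq_norm, sub_neg_eq_add]⟩
    show IsCompactOperator ⇑(-K)
    rw [coe_neg']; exact hK.neg
  have hclosed : IsClosed {f : H →L[ℂ] H | IsCompactOperator ⇑f} :=
    isClosed_setOf_isCompactOperator
  exact hclosed.closure_subset hmem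

private lemma IsCompactOperator.clm_congr {A B : H →L[ℂ] H} (h : A = B)
    (hA : IsCompactOperator ⇑A) : IsCompactOperator ⇑B := h ▸ hA

/-- coercion helper -/
private lemma isCompactOperator_neg_clm {A : H →L[ℂ] H} (hA : IsCompactOperator ⇑A) :
    IsCompactOperator ⇑(-A) := by
  rw [coe_neg']; exact hA.neg

private lemma isCompactOperator_add_clm {A B : H →L[ℂ] H} (hA : IsCompactOperator ⇑A)
    (hB : IsCompactOperator ⇑B) : IsCompactOperator ⇑(A + B) := by
  rw [coe_add']; exact hA.add hB

private lemma isCompactOperator_sub_clm {A B : H →L[ℂ] H} (hA : IsCompactOperator ⇑A)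
    (hB : IsCompactOperator ⇑B) : IsCompactOperator ⇑(A - B) := by
  rw [coe_sub']; exact hA.sub hB

private lemma isCompactOperator_comp_clm {A : H →L[ℂ] H} (hA : IsCompactOperator ⇑A)
    (B : H →L[ℂ] H) : IsCompactOperator ⇑(A ∘L B) := by
  rw [coe_comp']; exact hA.comp_clm B

private lemma isCompactOperator_clm_comp {A : H →L[ℂ] H} (hA : IsCompactOperator ⇑A)
    (B : H →L[ℂ] H) : IsCompactOperator ⇑(B ∘L A) := by
  rw [coe_comp']; exact hA.clm_comp B

/-- essNorm is invariant under compact perturbations. -/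
private lemma essNorm_congr {A B : H →L[ℂ] H} (h : IsCompactOperator ⇑(A - B)) :
    essNorm A = essNorm B := by
  have key : ∀ A B : H →L[ℂ] H, IsCompactOperator ⇑(A - B) → essNorm B ≤ essNorm A := by
    intro A B hAB
    refine le_csInf (essNorm_set_nonempty A) ?_
    rintro c ⟨K, hK, rfl⟩
    have h1 : IsCompactOperator ⇑(K + (A - B)) := isCompactOperator_add_clm hK hAB
    have h2 : B + (K + (A - B)) = A + K := by abel
    calc essNorm B ≤ ‖B + (K + (A - B))‖ := essNorm_le B h1
      _ = ‖A + K‖ := by rw [h2]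
  have h' : IsCompactOperator ⇑(B - A) := by
    have := isCompactOperator_neg_clm h
    rwa [neg_sub] at this
  exact le_antisymm (key B A h') (key A B h)

/-- Submultiplicativity for squares. -/
private lemma essNorm_comp_self_le (E : H →L[ℂ] H) :
    essNorm (E ∘L E) ≤ essNorm E * essNorm E := by
  have hnn := essNorm_nonneg E
  set r := essNorm E with hr
  have step : ∀ ε : ℝ, 0 < ε → essNorm (E ∘L E) ≤ (r + ε) * (r + ε) := by
    intro ε hε
    have hlt : essNorm E < r + ε := by linarith
    obtain ⟨c, ⟨K, hK, rfl⟩, hc⟩ := exists_lt_of_csInf_lt (essNorm_set_nonempty E) hlt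
    have hcomp : IsCompactOperator
        ⇑(E ∘L K + K ∘L E + K ∘L K) :=
      isCompactOperator_add_clm
        (isCompactOperator_add_clm (isCompactOperator_clm_comp hK E)
          (isCompactOperator_comp_clm hK E))
        (isCompactOperator_comp_clm hK K)
    have heq : E ∘L E + (E ∘L K + K ∘L E + K ∘L K) = (E + K) ∘L (E + K) := by
      simp only [add_comp, comp_add]
      abel
    calc essNorm (E ∘L E) ≤ ‖E ∘L E + (E ∘L K + K ∘L E + K ∘L K)‖ := essNorm_le _ hcomp
      _ = ‖(E + K) ∘L (E + K)‖ := by rw [heq]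
      _ ≤ ‖E + K‖ * ‖E + K‖ := opNorm_comp_le _ _
      _ ≤ (r + ε) * (r + ε) := by nlinarith [norm_nonneg (E + K)]
  -- pass to the limit ε → 0
  refine le_of_forall_pos_le_add fun δ hδ => ?_
  have hpos : (0:ℝ) < 2 * r + 1 := by linarith
  set ε := min 1 (δ / (2 * r + 1)) with hε
  have hε0 : 0 < ε := lt_min one_pos (by positivity)
  have hε1 : ε ≤ 1 := min_le_left _ _
  have hε2 : ε * (2 * r + 1) ≤ δ := by
    rw [← le_div_iff₀ hpos]
    exact min_le_right _ _
  calc essNorm (E ∘L E) ≤ (r + ε) * (r + ε) := step ε hε0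
    _ ≤ r * r + δ := by nlinarith

end EssNorm

/-- `P ⊥* Q` iff `π(PQ) = π(QP)` and `P ⊤* Q`. -/
theorem stmt2 {H : Type*} [NormedAddCommGroup H] [InnerProductSpace ℂ H] [CompleteSpace H]
    (P Q : H →L[ℂ] H)
    (hP2 : P ∘L P = P) (hPsa : ContinuousLinearMap.adjoint P = P)
    (hQ2 : Q ∘L Q = Q) (hQsa : ContinuousLinearMap.adjoint Q = Q) :
    IsCompactOperator ⇑(P ∘L Q) ↔
      (IsCompactOperator ⇑(P ∘L Q - Q ∘L P) ∧ essNorm (P ∘L Q) < 1) := by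
  constructor
  · intro hPQ
    -- QP is compact since (QP)*(QP) = PQQP = ((PQ)∘Q)∘P is compact (Schauder-type lemma)
    have hQP : IsCompactOperator ⇑(Q ∘L P) := by
      apply isCompactOperator_of_adjoint_comp
      have hadj : adjoint (Q ∘L P) = P ∘L Q := by
        rw [adjoint_comp, hPsa, hQsa]
      rw [hadj]
      have : (P ∘L Q) ∘L (Q ∘L P) = ((P ∘L Q) ∘L Q) ∘L P := by
        ext x; simp
      rw [this]
      exact isCompactOperator_comp_clm
        (isCompactOperator_comp_clm hPQ Q) P
    refine ⟨isCompactOperator_sub_clm hPQ hQP, ?_⟩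
    have h0 : essNorm (P ∘L Q) ≤ 0 := by
      have := essNorm_le (P ∘L Q) (isCompactOperator_neg_clm hPQ)
      simpa using this
    linarith
  · rintro ⟨hcomm, hlt⟩
    set E := P ∘L Q with hE
    -- E² - E = P ∘ (QP - PQ) ∘ Q is compact
    have hE2 : IsCompactOperator ⇑(E ∘L E - E) := by
      have heq : E ∘L E - E = P ∘L ((Q ∘L P - P ∘L Q) ∘L Q) := by
        simp only [hE, comp_sub, sub_comp, comp_assoc, hP2, hQ2]
        rw [← comp_assoc P P Q, hP2]
      rw [heq]
      have h1 : IsCompactOperator ⇑(Q ∘L P - P ∘L Q) := by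
        have := isCompactOperator_neg_clm hcomm
        rwa [neg_sub] at this
      exact isCompactOperator_clm_comp (isCompactOperator_comp_clm h1 Q) P
    have hcongr : essNorm (E ∘L E) = essNorm E := essNorm_congr hE2
    have hle : essNorm E ≤ essNorm E * essNorm E := by
      have h := essNorm_comp_self_le E
      rwa [hcongr] at h
    have hnn := essNorm_nonneg E
    have hzero : essNorm E = 0 := by nlinarith
    exact isCompactOperator_of_essNorm_eq_zero hzero
end

section
/- Let v₀, …, v_{n−1} be orthonormal vectors in a Hilbert space H and P a projection on H such that v_i ⟂ P v_j for all distinct i, j < n. Then the operator norm of P composed with the orthogonal projection onto span{v₀,…,v_{n−1}} equals max_{i<n} ‖P v_i‖. -/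
open ContinuousLinearMap

local notation "⟪" x ", " y "⟫" => @inner ℂ _ _ x y

lemma aux_norm_sum {H : Type*} [NormedAddCommGroup H] [InnerProductSpace ℂ H]
    {n : ℕ} (w : Fin n → H) (hw : ∀ i j : Fin n, i ≠ j → ⟪w i, w j⟫ = 0) (c : Fin n → ℂ) :
    ‖∑ i, c i • w i‖ ^ 2 = ∑ i, ‖c i‖ ^ 2 * ‖w i‖ ^ 2 := by
  have h1 : ⟪∑ i, c i • w i, ∑ i, c i • w i⟫
      = ∑ i, ((‖c i‖ : ℂ) ^ 2 * (‖w i‖ : ℂ) ^ 2) := by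
    rw [sum_inner]
    refine Finset.sum_congr rfl fun i _ => ?_
    rw [inner_sum, Finset.sum_eq_single i]
    · rw [inner_smul_left, inner_smul_right, inner_self_eq_norm_sq_to_K, ← mul_assoc,
        RCLike.conj_mul]
      norm_cast
    · intro j _ hj
      rw [inner_smul_left, inner_smul_right, hw i j (Ne.symm hj), mul_zero, mul_zero]
    · intro h; exact absurd (Finset.mem_univ i) h
  have h2 : (‖∑ i, c i • w i‖ : ℝ) ^ 2 = RCLike.re ⟪∑ i, c i • w i, ∑ i, c i • w i⟫ :=
    InnerProductSpace.norm_sq_eq_re_inner (𝕜 := ℂ) _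
  rw [h2, h1, map_sum]
  refine Finset.sum_congr rfl fun i _ => ?_
  norm_cast

/-- If `v₀,…,v_{n-1}` are orthonormal and `P` is a projection with `v i ⟂ P (v j)` for
`i ≠ j`, then the norm of `P` composed with the orthogonal projection `p` onto
`span {v i}` equals `max_i ‖P (v i)‖`. -/
theorem stmt4 {H : Type*} [NormedAddCommGroup H] [InnerProductSpace ℂ H] [CompleteSpace H]
    {n : ℕ} (hn : 0 < n) (v : Fin n → H) (hv : Orthonormal ℂ v)
    (P : H →L[ℂ] H) (hP2 : P ∘L P = P) (hPsa : ContinuousLinearMap.adjoint P = P)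
    (horth : ∀ i j : Fin n, i ≠ j → inner ℂ (v i) (P (v j)) = (0 : ℂ))
    (p : H →L[ℂ] H) (hp2 : p ∘L p = p) (hpsa : ContinuousLinearMap.adjoint p = p)
    (hrange : LinearMap.range (p : H →ₗ[ℂ] H) = Submodule.span ℂ (Set.range v)) :
    ‖P ∘L p‖ = ⨆ i : Fin n, ‖P (v i)‖ := by
  have hbdd : BddAbove (Set.range fun i : Fin n => ‖P (v i)‖) :=
    (Set.finite_range _).bddAbove
  have hle : ∀ i, ‖P (v i)‖ ≤ ⨆ i : Fin n, ‖P (v i)‖ := fun i => le_ciSup hbdd i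
  set M := ⨆ i : Fin n, ‖P (v i)‖ with hM
  have hM0 : 0 ≤ M := le_trans (norm_nonneg _) (hle ⟨0, hn⟩)
  have hPP : ∀ a b : H, ⟪P a, P b⟫ = ⟪a, P b⟫ := by
    intro a b
    have h := DFunLike.congr_fun hP2 b
    simp only [comp_apply] at h
    have step : ⟪P a, P b⟫ = ⟪a, P (P b)⟫ := by
      conv_rhs => rw [← ContinuousLinearMap.adjoint_inner_left]
      rw [hPsa]
    rw [step, h]
  have hpv : ∀ i, p (v i) = v i := by
    intro i
    have hm : v i ∈ Submodule.span ℂ (Set.range v) := Submodule.subset_span ⟨i, rfl⟩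
    rw [← hrange] at hm
    obtain ⟨z, hz⟩ := hm
    have h := DFunLike.congr_fun hp2 z
    simp only [comp_apply] at h
    have hz' : p z = v i := hz
    rw [← hz', h]
  have hpnorm : ∀ x, ‖p x‖ ≤ ‖x‖ := by
    intro x
    have h := DFunLike.congr_fun hp2 x
    simp only [comp_apply] at h
    have h1 : ⟪p x, p x⟫ = ⟪x, p x⟫ := by
      have step : ⟪p x, p x⟫ = ⟪x, p (p x)⟫ := by
        conv_rhs => rw [← ContinuousLinearMap.adjoint_inner_left]
        rw [hpsa]
      rw [step, h]
    have h2 : (‖p x‖ : ℝ) ^ 2 = RCLike.re ⟪x, p x⟫ := by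
      rw [← h1]; exact InnerProductSpace.norm_sq_eq_re_inner (𝕜 := ℂ) _
    have h3 : RCLike.re ⟪x, p x⟫ ≤ ‖x‖ * ‖p x‖ :=
      le_trans (RCLike.re_le_norm _) (norm_inner_le_norm _ _)
    nlinarith [norm_nonneg (p x), norm_nonneg x]
  have key : ∀ y ∈ Submodule.span ℂ (Set.range v), ‖P y‖ ≤ M * ‖y‖ := by
    intro y hy
    obtain ⟨c, rfl⟩ := (Submodule.mem_span_range_iff_exists_fun ℂ).mp hy
    have hPsum : P (∑ i, c i • v i) = ∑ i, c i • P (v i) := by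
      rw [map_sum]; simp
    have hworth : ∀ i j : Fin n, i ≠ j → ⟪P (v i), P (v j)⟫ = 0 := fun i j hij => by
      rw [hPP, horth i j hij]
    have h1 : ‖P (∑ i, c i • v i)‖ ^ 2 = ∑ i, ‖c i‖ ^ 2 * ‖P (v i)‖ ^ 2 := by
      rw [hPsum]; exact aux_norm_sum _ hworth c
    have h2 : ‖∑ i, c i • v i‖ ^ 2 = ∑ i, ‖c i‖ ^ 2 := by
      have := aux_norm_sum v (fun i j hij => hv.2 hij) c
      simpa [hv.1] using this
    have h3 : ‖P (∑ i, c i • v i)‖ ^ 2 ≤ (M * ‖∑ i, c i • v i‖) ^ 2 := by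
      rw [h1, mul_pow, h2, Finset.mul_sum]
      refine Finset.sum_le_sum fun i _ => ?_
      have h4 : ‖P (v i)‖ ^ 2 ≤ M ^ 2 := pow_le_pow_left₀ (norm_nonneg _) (hle i) 2
      calc ‖c i‖ ^ 2 * ‖P (v i)‖ ^ 2 ≤ ‖c i‖ ^ 2 * M ^ 2 :=
            mul_le_mul_of_nonneg_left h4 (sq_nonneg _)
        _ = M ^ 2 * ‖c i‖ ^ 2 := mul_comm _ _
    exact (pow_le_pow_iff_left₀ (norm_nonneg _)
      (mul_nonneg hM0 (norm_nonneg _)) two_ne_zero).mp h3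
  apply le_antisymm
  · refine opNorm_le_bound _ hM0 fun x => ?_
    rw [comp_apply]
    have hmem : p x ∈ Submodule.span ℂ (Set.range v) := by
      rw [← hrange]; exact ⟨x, rfl⟩
    calc ‖P (p x)‖ ≤ M * ‖p x‖ := key _ hmem
      _ ≤ M * ‖x‖ := mul_le_mul_of_nonneg_left (hpnorm x) hM0
  · haveI : Nonempty (Fin n) := ⟨⟨0, hn⟩⟩
    refine ciSup_le fun i => ?_
    calc ‖P (v i)‖ = ‖(P ∘L p) (v i)‖ := by rw [comp_apply, hpv]
      _ ≤ ‖P ∘L p‖ * ‖v i‖ := le_opNorm _ _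
      _ = ‖P ∘L p‖ := by rw [hv.1 i, mul_one]
end

section
/- There exists a family (X_x) indexed by finite subsets x of ω₁, with each X_x an infinite subset of ℕ, such that: X_∅ = ℕ; for every nonempty finite x ⊆ ω₁, X_x ⊆ X_{x \ {max x}}; and whenever x ≠ y are nonempty finite subsets of ω₁ with max x = max y, X_x ∩ X_y = ∅. -/
open Cardinal Set Function

namespace Stmt8Aux

/-- Disjoint refinement: countably many infinite subsets of ℕ admit pairwise disjoint
infinite refinements. -/
lemma refineLemma {ι : Type*} [Countable ι] (P : ι → Set ℕ) :
    ∃ A : ι → Set ℕ, (∀ i, (A i).Infinite) ∧ (∀ i j, i ≠ j → A i ∩ A j = ∅) ∧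
      (∀ i, (P i).Infinite → A i ⊆ P i) := by
  classical
  obtain ⟨e, he⟩ := Countable.exists_injective_nat ι
  set Q : ι → Set ℕ := fun i => if (P i).Infinite then P i else Set.univ with hQdef
  have hQ : ∀ i, (Q i).Infinite := by
    intro i
    by_cases h : (P i).Infinite
    · simpa [hQdef, h] using h
    · simpa [hQdef, h] using Set.infinite_univ
  set R : ℕ → Set ℕ := fun n => if h : ∃ i, e i = n then Q h.choose else Set.univ with hRdef
  have hR : ∀ n, (R n).Infinite := by
    intro n
    by_cases h : ∃ i, e i = n
    · simpa [hRdef, h] using hQ h.choose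
    · simpa [hRdef, h] using Set.infinite_univ
  have hRe : ∀ i, R (e i) = Q i := by
    intro i
    have h : ∃ j, e j = e i := ⟨i, rfl⟩
    have : h.choose = i := he h.choose_spec
    simp [hRdef, h, this]
  have step : ∀ n a : ℕ, ∃ b, b ∈ R (Nat.unpair n).1 ∧ a < b := by
    intro n a
    obtain ⟨b, hb, hab⟩ := (hR (Nat.unpair n).1).exists_gt a
    exact ⟨b, hb, hab⟩
  set f : ℕ → ℕ := fun n =>
    Nat.rec (Classical.choose (step 0 0))
      (fun m ih => Classical.choose (step (m + 1) ih)) n with hfdef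
  have hfmem : ∀ n, f n ∈ R (Nat.unpair n).1 := by
    intro n
    cases n with
    | zero => exact (Classical.choose_spec (step 0 0)).1
    | succ m => exact (Classical.choose_spec (step (m + 1) (f m))).1
  have hflt : ∀ n, f n < f (n + 1) := by
    intro n
    exact (Classical.choose_spec (step (n + 1) (f n))).2
  have hfmono : StrictMono f := strictMono_nat_of_lt_succ hflt
  have hfinj : Injective f := hfmono.injective
  refine ⟨fun i => f '' {m | (Nat.unpair m).1 = e i}, ?_, ?_, ?_⟩
  · intro i
    refine Set.infinite_of_injective_forall_mem
      (f := fun k : ℕ => f (Nat.pair (e i) k)) ?_ ?_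
    · intro a b hab
      exact (Nat.pair_eq_pair.mp (hfinj hab)).2
    · intro k
      exact ⟨Nat.pair (e i) k, by simp [Nat.unpair_pair], rfl⟩
  · intro i j hij
    ext m
    simp only [Set.mem_inter_iff, Set.mem_image, Set.mem_setOf_eq, Set.mem_empty_iff_false,
      iff_false, not_and]
    rintro ⟨a, ha, rfl⟩ ⟨b, hb, hba⟩
    have : a = b := hfinj hba.symm
    subst this
    exact hij (he (ha ▸ hb ▸ rfl : e i = e j))
  · intro i hPi
    rintro m ⟨a, ha, rfl⟩
    have := hfmem a
    rw [ha, hRe] at this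
    simpa [hQdef, hPi] using this

universe u

/-- `ω₁` as a subtype of ordinals. -/
abbrev OO : Type (u + 1) := {o : Ordinal.{u} // o < (Cardinal.aleph 1).ord}

lemma wfOO : WellFounded ((· < ·) : OO → OO → Prop) :=
  InvImage.wf (fun α : OO => α.1) Ordinal.lt_wf

lemma countable_index (α : OO) : Countable {s : Finset OO // ∀ β ∈ s, β < α} := by
  classical
  have h1 : (Set.Iio α.1).Countable := by
    rw [Cardinal.countable_iff_lt_aleph_one, Ordinal.mk_Iio_ordinal, Cardinal.lift_lt_aleph_one]
    exact Cardinal.lt_ord.mp α.2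
  have h2 : Countable {β : OO // β < α} := by
    haveI := h1.to_subtype
    have hinj : Injective (fun β : {β : OO // β < α} => (⟨β.1.1, β.2⟩ : Set.Iio α.1)) := by
      intro a b hab
      simp only [Subtype.mk.injEq] at hab
      have hab2 := congrArg Subtype.val hab
      exact Subtype.ext (Subtype.ext hab2)
    exact hinj.countable
  haveI := h2
  have hinj : Injective (fun t : {s : Finset OO // ∀ β ∈ s, β < α} =>
      t.1.subtype (fun β => β < α)) := by
    intro s t hst
    have h3 : Finset.subtype (fun β => β < α) s.1 = Finset.subtype (fun β => β < α) t.1 := hst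
    apply Subtype.ext
    rw [← Finset.subtype_map_of_mem s.2, ← Finset.subtype_map_of_mem t.2, h3]
  exact hinj.countable

/-- The parent family at stage `α`, given values at earlier stages. -/
noncomputable def PfamIH (α : OO) (IH : ∀ β : OO, β < α → Finset OO → Set ℕ) :
    {s : Finset OO // ∀ β ∈ s, β < α} → Set ℕ := fun t =>
  if hn : t.1.Nonempty then
    IH (t.1.max' hn) (t.2 _ (t.1.max'_mem hn)) (t.1.erase (t.1.max' hn))
  else Set.univ

noncomputable def body (α : OO) (IH : ∀ β : OO, β < α → Finset OO → Set ℕ) :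
    Finset OO → Set ℕ := fun s =>
  if h : ∀ β ∈ s, β < α then
    (Classical.choose (@refineLemma _ (countable_index α) (PfamIH α IH))) ⟨s, h⟩
  else ∅

noncomputable def famF : OO → Finset OO → Set ℕ := WellFounded.fix wfOO body

lemma famF_eq (α : OO) : famF α = body α (fun β _ => famF β) :=
  WellFounded.fix_eq wfOO body α

noncomputable def Pfam (α : OO) : {s : Finset OO // ∀ β ∈ s, β < α} → Set ℕ :=
  PfamIH α (fun β _ => famF β)

noncomputable def Afam (α : OO) : {s : Finset OO // ∀ β ∈ s, β < α} → Set ℕ :=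
  Classical.choose (@refineLemma _ (countable_index α) (Pfam α))

lemma Afam_spec (α : OO) :
    (∀ i, (Afam α i).Infinite) ∧ (∀ i j, i ≠ j → Afam α i ∩ Afam α j = ∅) ∧
      (∀ i, (Pfam α i).Infinite → Afam α i ⊆ Pfam α i) :=
  Classical.choose_spec (@refineLemma _ (countable_index α) (Pfam α))

lemma famF_valid (α : OO) (s : Finset OO) (h : ∀ β ∈ s, β < α) :
    famF α s = Afam α ⟨s, h⟩ := by
  rw [famF_eq]
  simp only [body, dif_pos h]
  rfl

lemma famF_infinite (α : OO) (s : Finset OO) (h : ∀ β ∈ s, β < α) :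
    (famF α s).Infinite := by
  rw [famF_valid α s h]
  exact (Afam_spec α).1 _

lemma erase_valid (s : Finset OO) (hn : s.Nonempty) :
    ∀ β ∈ s.erase (s.max' hn), β < s.max' hn := by
  intro β hβ
  have h1 : β ∈ s := Finset.mem_of_mem_erase hβ
  have h2 : β ≠ s.max' hn := Finset.ne_of_mem_erase hβ
  exact lt_of_le_of_ne (Finset.le_max' s β h1) h2

lemma famF_subset (α : OO) (s : Finset OO) (h : ∀ β ∈ s, β < α) (hn : s.Nonempty) :
    famF α s ⊆ famF (s.max' hn) (s.erase (s.max' hn)) := by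
  rw [famF_valid α s h]
  have hP : Pfam α ⟨s, h⟩ = famF (s.max' hn) (s.erase (s.max' hn)) := by
    simp only [Pfam, PfamIH, dif_pos hn]
  have hinf : (Pfam α ⟨s, h⟩).Infinite := by
    rw [hP]
    exact famF_infinite _ _ (erase_valid s hn)
  have := (Afam_spec α).2.2 ⟨s, h⟩ hinf
  rwa [hP] at this

lemma famF_disj (α : OO) (s t : Finset OO) (hs : ∀ β ∈ s, β < α) (ht : ∀ β ∈ t, β < α)
    (hst : s ≠ t) : famF α s ∩ famF α t = ∅ := by
  rw [famF_valid α s hs, famF_valid α t ht]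
  exact (Afam_spec α).2.1 _ _ (by simpa using hst)

end Stmt8Aux

/-- There is a family `(X_x)` indexed by finite subsets of `ω₁`, each an infinite subset of
`ℕ`, with `X_∅ = ℕ`, `X_x ⊆ X_{x \ {max x}}` for nonempty `x`, and `X_x ∩ X_y = ∅`
whenever `x ≠ y` have the same maximum. -/
theorem stmt8 :
    ∃ X : Finset {o : Ordinal // o < (Cardinal.aleph 1).ord} → Set ℕ,
      X ∅ = Set.univ ∧
      (∀ x, (X x).Infinite) ∧
      (∀ (x) (hx : x.Nonempty), X x ⊆ X (x.erase (x.max' hx))) ∧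
      (∀ (x y) (hx : x.Nonempty) (hy : y.Nonempty),
        x ≠ y → x.max' hx = y.max' hy → X x ∩ X y = ∅) := by
  classical
  open Stmt8Aux in
  refine ⟨fun x => if h : x.Nonempty then famF (x.max' h) (x.erase (x.max' h)) else Set.univ,
    ?_, ?_, ?_, ?_⟩
  · simp
  · intro x
    by_cases h : x.Nonempty
    · simp only [dif_pos h]
      exact famF_infinite _ _ (erase_valid x h)
    · simp only [dif_neg h]
      exact Set.infinite_univ
  · intro x hx
    simp only [dif_pos hx]
    by_cases hs : (x.erase (x.max' hx)).Nonempty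
    · simp only [dif_pos hs]
      exact famF_subset _ _ (erase_valid x hx) hs
    · simp only [dif_neg hs]
      exact Set.subset_univ _
  · intro x y hx hy hxy hmax
    simp only [dif_pos hx, dif_pos hy]
    rw [← hmax]
    apply famF_disj (x.max' hx) _ _ (erase_valid x hx)
    · rw [hmax]
      exact erase_valid y hy
    · intro heq
      apply hxy
      have h1 : x = insert (x.max' hx) (x.erase (x.max' hx)) :=
        (Finset.insert_erase (x.max'_mem hx)).symm
      have h2 : y = insert (x.max' hx) (y.erase (x.max' hx)) := by
        rw [hmax]
        exact (Finset.insert_erase (y.max'_mem hy)).symm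
      rw [h1, h2, heq]
end

section
/- The pseudo-disjointness number 𝔭([0,1]^ω) equals ℵ₁: there exists a family (f_ξ)_{ξ<ω₁} of functions f_ξ : ℕ → [0,∞) such that no single function f : ℕ → [0,1] is lim-inf disjoint from all f_ξ, i.e., for every f : ℕ → [0,1] there exists ξ < ω₁ with liminf_n |f(n) − f_ξ(n)| = 0. -/
open Filter

open Classical in
/-- Separator lemma: for a strictly increasing tuple of reals we can find a list of
rationals interleaving them, so that the count of list elements below `r i` is `i`. -/
lemma sep_lemma : ∀ (k : ℕ) (r : Fin (k+1) → ℝ), StrictMono r →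
    ∃ L : List ℚ, ∀ i : Fin (k+1),
      L.countP (fun q : ℚ => decide ((q : ℝ) < r i)) = i.val := by
  intro k
  induction k with
  | zero =>
    intro r _
    exact ⟨[], fun i => by simp [Fin.fin_one_eq_zero i]⟩
  | succ k ih =>
    intro r hr
    obtain ⟨L', hL'⟩ := ih (fun i => r i.succ) (fun a b hab => hr (by simpa using hab))
    have h01 : r 0 < r 1 := hr (by simp [Fin.lt_def])
    obtain ⟨q₀, hq₀l, hq₀r⟩ := exists_rat_btwn h01
    have hzero : L'.countP (fun q : ℚ => decide ((q : ℝ) < r 1)) = 0 := by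
      convert hL' 0 using 5 <;> simp
    have hLbig : ∀ q ∈ L', ¬ ((q : ℝ) < r 1) := by
      intro q hq
      have := List.countP_eq_zero.mp hzero q hq
      simpa using this
    refine ⟨q₀ :: L', fun i => ?_⟩
    refine Fin.cases ?_ ?_ i
    · rw [List.countP_cons]
      have h1 : ¬ ((q₀ : ℝ) < r 0) := not_lt.mpr hq₀l.le
      have h2 : L'.countP (fun q : ℚ => decide ((q : ℝ) < r 0)) = 0 := by
        rw [List.countP_eq_zero]
        intro q hq
        simp only [decide_eq_true_eq]
        exact fun h => hLbig q hq (h.trans h01)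
      simp [h1, h2]
    · intro i'
      rw [List.countP_cons]
      have h1 : (q₀ : ℝ) < r i'.succ := by
        refine hq₀r.trans_le (hr.monotone ?_)
        simp [Fin.le_def]
      have h2 : L'.countP (fun q : ℚ => decide ((q : ℝ) < r i'.succ)) = i'.val := hL' i'
      simp [h1, h2]


universe u

lemma mkI_aux : Cardinal.mk {o : Ordinal.{u} // o < (Cardinal.aleph 1).ord} =
    Cardinal.lift.{u+1, u} (Cardinal.aleph 1) := by
  have := Ordinal.mk_Iio_ordinal ((Cardinal.aleph 1).ord : Ordinal.{u})
  rw [Cardinal.card_ord] at this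
  exact this

lemma embI_aux : Nonempty ({o : Ordinal.{u} // o < (Cardinal.aleph 1).ord} ↪ ℝ) := by
  rw [← Cardinal.lift_mk_le']
  rw [Cardinal.lift_id', mkI_aux, Cardinal.mk_real, Cardinal.lift_aleph,
    Cardinal.lift_continuum, Ordinal.lift_one]
  exact Cardinal.aleph_one_le_continuum

lemma notCount_aux : ¬ Countable {o : Ordinal.{u} // o < (Cardinal.aleph 1).ord} := by
  intro h
  have hle := Cardinal.mk_le_aleph0 (α := {o : Ordinal.{u} // o < (Cardinal.aleph 1).ord})
  rw [mkI_aux, ← Cardinal.lift_aleph0.{u+1, u}, Cardinal.lift_le] at hle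
  exact absurd hle (not_le.mpr Cardinal.aleph0_lt_aleph_one)

/-- `𝔭([0,1]^ω) = ℵ₁`: there is an `ω₁`-indexed family of nonnegative functions on `ℕ`
such that no `f : ℕ → [0,1]` is lim-inf disjoint from all of them, i.e. every such `f`
satisfies `liminf |f n - f_ξ n| = 0` for some `ξ < ω₁`. -/
theorem stmt10 :
    ∃ F : {o : Ordinal // o < (Cardinal.aleph 1).ord} → ℕ → ℝ,
      (∀ ξ n, 0 ≤ F ξ n) ∧
      ∀ f : ℕ → ℝ, (∀ n, f n ∈ Set.Icc (0 : ℝ) 1) →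
        ∃ ξ, liminf (fun n => ((|f n - F ξ n| : ℝ) : EReal)) atTop = 0 := by
  classical
  set I := {o : Ordinal // o < (Cardinal.aleph 1).ord} with hI
  -- an injection of `I` into the reals
  obtain ⟨e⟩ := embI_aux
  -- the family
  set c : I → ℕ → ℕ := fun ξ n =>
    ((Denumerable.ofNat (List ℚ) n.unpair.1).countP
      (fun q : ℚ => decide ((q : ℝ) < e ξ))) + 1 with hc
  refine ⟨fun ξ p => (c ξ p.unpair.1 : ℝ) / ((p.unpair.2 : ℝ) + 1), ?_, ?_⟩
  · intro ξ p
    positivity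
  intro f hf
  by_contra hcon
  push_neg at hcon
  -- extract uniform separation data
  have key : ∀ ξ : I, ∃ kN : ℕ × ℕ, ∀ p ≥ kN.2,
      1 / ((kN.1 : ℝ) + 1) < |f p - (c ξ p.unpair.1 : ℝ) / ((p.unpair.2 : ℝ) + 1)| := by
    intro ξ
    have h0 : (0 : EReal) ≤ liminf (fun p : ℕ =>
        ((|f p - (c ξ p.unpair.1 : ℝ) / ((p.unpair.2 : ℝ) + 1)| : ℝ) : EReal)) atTop := by
      refine le_liminf_of_le (by isBoundedDefault) ?_
      exact Eventually.of_forall fun p => by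
        exact_mod_cast abs_nonneg _
    have hne := hcon ξ
    have hpos : (0 : EReal) < liminf (fun p : ℕ =>
        ((|f p - (c ξ p.unpair.1 : ℝ) / ((p.unpair.2 : ℝ) + 1)| : ℝ) : EReal)) atTop :=
      h0.lt_of_ne (Ne.symm hne)
    obtain ⟨ε, hε0, hεL⟩ := EReal.exists_between_coe_real hpos
    have hε0' : (0 : ℝ) < ε := by exact_mod_cast hε0
    have hev : ∀ᶠ p in atTop, (ε : EReal) <
        ((|f p - (c ξ p.unpair.1 : ℝ) / ((p.unpair.2 : ℝ) + 1)| : ℝ) : EReal) :=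
      eventually_lt_of_lt_liminf hεL
    obtain ⟨N, hN⟩ := eventually_atTop.mp hev
    obtain ⟨k, hk⟩ := exists_nat_one_div_lt hε0'
    refine ⟨(k, N), fun p hp => ?_⟩
    have := hN p hp
    have h2 : ε < |f p - (c ξ p.unpair.1 : ℝ) / ((p.unpair.2 : ℝ) + 1)| := by
      exact_mod_cast this
    exact lt_trans (by exact_mod_cast hk) h2
  choose K hK using key
  -- some fiber of K is infinite
  have hfib : ∃ kN : ℕ × ℕ, {ξ : I | K ξ = kN}.Infinite := by
    by_contra hfin
    push_neg at hfin
    have hcnt : (Set.univ : Set I).Countable := by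
      have : (Set.univ : Set I) = ⋃ kN : ℕ × ℕ, {ξ : I | K ξ = kN} := by
        ext ξ; simp
      rw [this]
      exact Set.countable_iUnion fun kN => (hfin kN).countable
    exact notCount_aux (Set.countable_univ_iff.mp hcnt)
  obtain ⟨⟨k, N⟩, hS⟩ := hfib
  -- pick k+1 indices in the fiber
  obtain ⟨t, hts, htc⟩ := hS.exists_subset_card_eq (k + 1)
  have hecard : (t.image e).card = k + 1 := by
    rw [Finset.card_image_of_injective _ e.injective, htc]
  -- sorted enumeration of their e-values
  set ρ := (t.image e).orderIsoOfFin hecard with hρ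
  set r : Fin (k+1) → ℝ := fun i => (ρ i : ℝ) with hr
  have hrmono : StrictMono r := fun a b hab => ρ.strictMono hab
  obtain ⟨L, hL⟩ := sep_lemma k r hrmono
  obtain ⟨a₀, ha₀⟩ : ∃ a₀, Denumerable.ofNat (List ℚ) a₀ = L :=
    ⟨_, Denumerable.ofNat_encode L⟩
  -- the evaluation point
  set n₀ := Nat.pair a₀ N with hn₀
  set p₀ := Nat.pair n₀ k with hp₀
  have hp₀N : p₀ ≥ N := le_trans (Nat.right_le_pair _ _) (Nat.left_le_pair _ _)
  have hup : p₀.unpair = (n₀, k) := Nat.unpair_pair _ _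
  -- for each i, the corresponding index ξᵢ
  have hgrid : ∀ i : Fin (k+1),
      1 / ((k : ℝ) + 1) < |f p₀ - ((i : ℝ) + 1) / ((k : ℝ) + 1)| := by
    intro i
    have hmem : (r i : ℝ) ∈ t.image e := (ρ i).2
    obtain ⟨ξ, hξt, hξe⟩ := Finset.mem_image.mp hmem
    have hξfib : K ξ = (k, N) := hts hξt
    have hcval : c ξ n₀ = i.val + 1 := by
      simp only [hc, hn₀, Nat.unpair_pair, ha₀, hξe, hL i]
    have := hK ξ p₀ (by rw [hξfib]; exact hp₀N)
    rw [hξfib] at this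
    simpa [hup, hcval, add_comm] using this
  -- contradiction with f p₀ ∈ [0,1]
  obtain ⟨hf0, hf1⟩ := hf p₀
  set u : ℝ := f p₀ * ((k : ℝ) + 1) with hu
  have hu0 : 0 ≤ u := by positivity
  have huk : u ≤ (k : ℝ) + 1 := by
    rw [hu]
    nlinarith [hf1]
  set i₀ : ℕ := min ⌊u⌋₊ k with hi₀
  have hi₀lt : i₀ < k + 1 := Nat.lt_succ_of_le (min_le_right _ _)
  have hile : (i₀ : ℝ) ≤ u := by
    have h1 : (⌊u⌋₊ : ℝ) ≤ u := Nat.floor_le hu0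
    have h2 : (i₀ : ℕ) ≤ ⌊u⌋₊ := min_le_left _ _
    exact le_trans (by exact_mod_cast h2) h1
  have hiup : u ≤ (i₀ : ℝ) + 1 := by
    rcases le_or_gt (⌊u⌋₊) k with h | h
    · have : i₀ = ⌊u⌋₊ := min_eq_left h
      rw [this]
      exact (Nat.lt_floor_add_one u).le
    · have : i₀ = k := min_eq_right h.le
      rw [this]; exact huk
  have habs : |f p₀ - ((i₀ : ℝ) + 1) / ((k : ℝ) + 1)| ≤ 1 / ((k : ℝ) + 1) := by
    have hk1 : (0 : ℝ) < (k : ℝ) + 1 := by positivity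
    have h1 : ((i₀ : ℝ)) / ((k : ℝ) + 1) ≤ f p₀ := by
      rw [div_le_iff₀ hk1]; exact hile
    have h2 : f p₀ ≤ ((i₀ : ℝ) + 1) / ((k : ℝ) + 1) := by
      rw [le_div_iff₀ hk1]; exact hiup
    have e1 : ((i₀ : ℝ) + 1) / ((k : ℝ) + 1) - 1 / ((k : ℝ) + 1) = (i₀ : ℝ) / ((k : ℝ) + 1) := by
      ring
    have h3 : (0 : ℝ) ≤ 1 / ((k : ℝ) + 1) := by positivity
    rw [abs_le]
    constructor <;> linarith
  have := hgrid ⟨i₀, hi₀lt⟩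
  simp only [Fin.val_mk] at this
  exact absurd habs (not_le.mpr this)
end
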